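/- The rightmost eigenvalue of M is real: there exists a real eigenvalue λ* of M such that Re μ ≤ λ* for every eigenvalue μ ∈ ℂ of M (regarding M as a complex matrix). -/

import Mathlib

open Matrix

noncomputable def Mmat {n : ℕ} (D b : Fin n → ℝ) :
    Matrix (Fin n ⊕ Fin n ⊕ Unit) (Fin n ⊕ Fin n ⊕ Unit) ℝ :=
  Matrix.of fun i j =>
    match i, j with
    | Sum.inl i, Sum.inl j => if i = j then D i else 0
    | Sum.inl i, Sum.inr (Sum.inl j) => if i = j then -b i else 0
    | Sum.inl _, Sum.inr (Sum.inr _) => 0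
    | Sum.inr (Sum.inl _), Sum.inl _ => 0
    | Sum.inr (Sum.inl i), Sum.inr (Sum.inl j) => if i = j then D i else 0
    | Sum.inr (Sum.inl i), Sum.inr (Sum.inr _) => -b i
    | Sum.inr (Sum.inr _), Sum.inl _ => 1
    | Sum.inr (Sum.inr _), Sum.inr _ => 0

/-- `f(y) = (1/4)‖y‖⁴ − (1/2) yᵀ D y + bᵀ y`. -/
noncomputable def fD {n : ℕ} (D b : Fin n → ℝ) (y : Fin n → ℝ) : ℝ :=
  (1/4) * (y ⬝ᵥ y)^2 - (1/2) * (y ⬝ᵥ (Matrix.diagonal D *ᵥ y)) + b ⬝ᵥ y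


noncomputable def Pr {n : ℕ} (D b : Fin n → ℝ) (x : ℝ) : ℝ :=
  x * ∏ i, (x - D i)^2 - ∑ i, (b i)^2 * ∏ j ∈ Finset.univ.erase i, (x - D j)^2

noncomputable def Pc {n : ℕ} (D b : Fin n → ℝ) (z : ℂ) : ℂ :=
  z * ∏ i, (z - (D i : ℂ))^2 - ∑ i, (b i : ℂ)^2 * ∏ j ∈ Finset.univ.erase i, (z - (D j : ℂ))^2

lemma Pc_ofReal {n : ℕ} (D b : Fin n → ℝ) (x : ℝ) :
    Pc D b (x : ℂ) = (Pr D b x : ℂ) := by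
  unfold Pr Pc
  push_cast
  ring

lemma exists_lstar {n : ℕ} (hn : 0 < n) (D b : Fin n → ℝ) :
    ∃ l : ℝ, Pr D b l = 0 ∧ ∀ x : ℝ, Pr D b x ≤ 0 → x ≤ l := by
  set R : ℝ := (∑ i, (b i)^2) + ∑ i, (|D i| + 1) with hR
  have hcont : Continuous (Pr D b) := by
    unfold Pr
    continuity
  have hbsum : 0 ≤ ∑ i, (b i)^2 := Finset.sum_nonneg fun i _ => sq_nonneg _
  have hDsum : 0 ≤ ∑ i, (|D i| + 1) := Finset.sum_nonneg fun i _ => by positivity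
  have hpos : ∀ x : ℝ, R < x → 0 < Pr D b x := by
    intro x hx
    simp only [hR] at hx
    have hfac : ∀ i : Fin n, 1 ≤ x - D i := by
      intro i
      have h1 : |D i| + 1 ≤ ∑ j, (|D j| + 1) :=
        Finset.single_le_sum (f := fun j => |D j| + 1)
          (fun j _ => by positivity) (Finset.mem_univ i)
      have h2 : D i ≤ |D i| := le_abs_self _
      linarith
    have hprodpos : 0 < ∏ i, (x - D i)^2 :=
      Finset.prod_pos fun i _ => by nlinarith [hfac i]
    have herase : ∀ i : Fin n, ∏ j ∈ Finset.univ.erase i, (x - D j)^2 ≤ ∏ j, (x - D j)^2 := by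
      intro i
      rw [← Finset.mul_prod_erase Finset.univ _ (Finset.mem_univ i)]
      have h1 : 0 ≤ ∏ j ∈ Finset.univ.erase i, (x - D j)^2 :=
        Finset.prod_nonneg fun j _ => sq_nonneg _
      have h2 : 1 ≤ (x - D i)^2 := by nlinarith [hfac i]
      nlinarith
    have hsum : ∑ i, (b i)^2 * ∏ j ∈ Finset.univ.erase i, (x - D j)^2
        ≤ (∑ i, (b i)^2) * ∏ j, (x - D j)^2 := by
      rw [Finset.sum_mul]
      exact Finset.sum_le_sum fun i _ =>
        mul_le_mul_of_nonneg_left (herase i) (sq_nonneg _)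
    have hxb : (∑ i, (b i)^2) < x := by linarith
    have : (∑ i, (b i)^2) * ∏ j, (x - D j)^2 < x * ∏ j, (x - D j)^2 :=
      mul_lt_mul_of_pos_right hxb hprodpos
    unfold Pr
    linarith
  -- S nonempty
  have hmem : Pr D b (D ⟨0, hn⟩) ≤ 0 := by
    unfold Pr
    have h0 : ∏ i, (D ⟨0, hn⟩ - D i)^2 = 0 :=
      Finset.prod_eq_zero (Finset.mem_univ ⟨0, hn⟩) (by simp)
    rw [h0, mul_zero]
    have : 0 ≤ ∑ i, (b i)^2 * ∏ j ∈ Finset.univ.erase i, (D ⟨0, hn⟩ - D j)^2 :=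
      Finset.sum_nonneg fun i _ => mul_nonneg (sq_nonneg _)
        (Finset.prod_nonneg fun j _ => sq_nonneg _)
    linarith
  set S : Set ℝ := {x | Pr D b x ≤ 0} with hS
  have hSne : S.Nonempty := ⟨_, hmem⟩
  have hSbdd : BddAbove S := by
    refine ⟨R, fun x hx => ?_⟩
    by_contra hxc
    push_neg at hxc
    exact absurd hx (by simp only [hS, Set.mem_setOf_eq, not_le]; exact hpos x hxc)
  have hSclosed : IsClosed S := IsClosed.preimage hcont isClosed_Iic
  refine ⟨sSup S, ?_, fun x hx => le_csSup hSbdd hx⟩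
  have hlmem : sSup S ∈ S := hSclosed.csSup_mem hSne hSbdd
  have hle : Pr D b (sSup S) ≤ 0 := hlmem
  rcases lt_or_eq_of_le hle with hlt | heq
  · exfalso
    have hsup_le : sSup S ≤ R := csSup_le hSne (fun x hx => by
      by_contra hc; push_neg at hc; exact absurd hx (by simp only [hS, Set.mem_setOf_eq, not_le]; exact hpos x hc))
    have hR1 : 0 < Pr D b (R + 1) := hpos _ (by linarith)
    have hivt : (0:ℝ) ∈ Set.Ioo (Pr D b (sSup S)) (Pr D b (R+1)) := ⟨hlt, hR1⟩
    have := intermediate_value_Ioo (by linarith : sSup S ≤ R + 1) hcont.continuousOn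
    obtain ⟨y, hy, hy0⟩ := this hivt
    have : y ≤ sSup S := le_csSup hSbdd (by simp [hS, hy0.le])
    exact absurd this (not_le.mpr hy.1)
  · exact heq


lemma re_inv_sq_le (z : ℂ) (hz : z.re ≠ 0) : ((z^2)⁻¹).re ≤ ((z.re)^2)⁻¹ := by
  have hns : Complex.normSq (z^2) = (z.re^2 + z.im^2)^2 := by
    rw [map_pow, Complex.normSq_apply]; ring
  have hre : (z^2).re = z.re^2 - z.im^2 := by
    simp [pow_two, Complex.mul_re]
  rw [Complex.inv_re, hns, hre, ← one_div]
  have ha : 0 < z.re^2 := by positivity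
  have h2 : 0 < (z.re^2 + z.im^2)^2 := by positivity
  rw [div_le_div_iff₀ h2 ha]
  nlinarith [sq_nonneg (z.re*z.im), sq_nonneg z.im, sq_nonneg (z.im^2)]

lemma root_re_le {n : ℕ} (D b : Fin n → ℝ) (μ : ℂ) (h : Pc D b μ = 0) :
    Pr D b μ.re ≤ 0 := by
  by_cases him : μ.im = 0
  · have hμ : (μ.re : ℂ) = μ := Complex.ext (by simp) (by simp [him])
    rw [← hμ, Pc_ofReal] at h
    have h0 := Complex.ofReal_eq_zero.mp h
    linarith
  · by_cases hα : ∃ k, D k = μ.re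
    · obtain ⟨k, hk⟩ := hα
      unfold Pr
      have h0 : ∏ i, (μ.re - D i)^2 = 0 :=
        Finset.prod_eq_zero (Finset.mem_univ k) (by rw [hk]; ring)
      rw [h0, mul_zero]
      have hnn : 0 ≤ ∑ i, (b i)^2 * ∏ j ∈ Finset.univ.erase i, (μ.re - D j)^2 :=
        Finset.sum_nonneg fun i _ => mul_nonneg (sq_nonneg _)
          (Finset.prod_nonneg fun j _ => sq_nonneg _)
      linarith
    · push_neg at hα
      set α := μ.re with hαdef
      have hzne : ∀ i : Fin n, (μ - (D i : ℂ)) ≠ 0 := by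
        intro i hc
        apply him
        have := congrArg Complex.im hc
        simpa using this
      have hsq : ∀ i : Fin n, ((μ - (D i:ℂ))^2) ≠ 0 := fun i => pow_ne_zero _ (hzne i)
      have hQ : (∏ i, (μ - (D i:ℂ))^2) ≠ 0 :=
        Finset.prod_ne_zero_iff.mpr fun i _ => hsq i
      have hkey : μ = ∑ i, (b i:ℂ)^2 * ((μ - (D i:ℂ))^2)⁻¹ := by
        have h1 : μ * ∏ i, (μ - (D i:ℂ))^2
            = ∑ i, (b i:ℂ)^2 * ∏ j ∈ Finset.univ.erase i, (μ - (D j:ℂ))^2 := by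
          unfold Pc at h; linear_combination h
        calc μ = (μ * ∏ i, (μ - (D i:ℂ))^2) * (∏ i, (μ - (D i:ℂ))^2)⁻¹ := by
              field_simp
          _ = (∑ i, (b i:ℂ)^2 * ∏ j ∈ Finset.univ.erase i, (μ - (D j:ℂ))^2)
                * (∏ i, (μ - (D i:ℂ))^2)⁻¹ := by rw [h1]
          _ = ∑ i, (b i:ℂ)^2 * ((μ - (D i:ℂ))^2)⁻¹ := by
              rw [Finset.sum_mul]
              refine Finset.sum_congr rfl fun i _ => ?_
              have hEne : (∏ j ∈ Finset.univ.erase i, (μ - (D j:ℂ))^2) ≠ 0 :=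
                Finset.prod_ne_zero_iff.mpr fun j _ => hsq j
              rw [← Finset.mul_prod_erase Finset.univ _ (Finset.mem_univ i), mul_inv]
              field_simp
      have hre : α = ∑ i, (b i)^2 * (((μ - (D i:ℂ))^2)⁻¹).re := by
        have h2 := congrArg Complex.re hkey
        rw [Complex.re_sum] at h2
        simpa [← Complex.ofReal_pow, Complex.re_ofReal_mul] using h2
      have hαne : ∀ i : Fin n, α - D i ≠ 0 := fun i => sub_ne_zero.mpr (Ne.symm (hα i))
      have hbound : ∀ i, (((μ - (D i:ℂ))^2)⁻¹).re ≤ ((α - D i)^2)⁻¹ := by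
        intro i
        have hr : (μ - (D i:ℂ)).re = α - D i := by simp [hαdef]
        have := re_inv_sq_le (μ - (D i:ℂ)) (by rw [hr]; exact hαne i)
        rwa [hr] at this
      have hαle : α ≤ ∑ i, (b i)^2 * ((α - D i)^2)⁻¹ := by
        exact hre.le.trans (Finset.sum_le_sum fun i _ =>
          mul_le_mul_of_nonneg_left (hbound i) (sq_nonneg _))
      have hprodpos : 0 < ∏ i, (α - D i)^2 :=
        Finset.prod_pos fun i _ => (sq_nonneg _).lt_of_ne (Ne.symm (pow_ne_zero 2 (hαne i)))
      have hterm : ∀ i : Fin n, (b i)^2 * ((α - D i)^2)⁻¹ * ∏ j, (α - D j)^2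
          = (b i)^2 * ∏ j ∈ Finset.univ.erase i, (α - D j)^2 := by
        intro i
        rw [← Finset.mul_prod_erase Finset.univ _ (Finset.mem_univ i)]
        rw [mul_assoc, inv_mul_cancel_left₀ (pow_ne_zero 2 (hαne i))]
      have h2 : α * ∏ j, (α - D j)^2
          ≤ (∑ i, (b i)^2 * ((α - D i)^2)⁻¹) * ∏ j, (α - D j)^2 :=
        mul_le_mul_of_nonneg_right hαle hprodpos.le
      rw [Finset.sum_mul] at h2
      simp_rw [hterm] at h2
      unfold Pr
      linarith


lemma rowC1 {n : ℕ} (D b : Fin n → ℝ) (w : Fin n ⊕ Fin n ⊕ Unit → ℂ) (i : Fin n) :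
    ((Mmat D b).map Complex.ofReal *ᵥ w) (Sum.inl i)
      = D i * w (Sum.inl i) - b i * w (Sum.inr (Sum.inl i)) := by
  simp [Mmat, mulVec, dotProduct, Fintype.sum_sum_type, ite_mul, sub_eq_add_neg,
    apply_ite Complex.ofReal]

lemma rowC2 {n : ℕ} (D b : Fin n → ℝ) (w : Fin n ⊕ Fin n ⊕ Unit → ℂ) (i : Fin n) :
    ((Mmat D b).map Complex.ofReal *ᵥ w) (Sum.inr (Sum.inl i))
      = D i * w (Sum.inr (Sum.inl i)) - b i * w (Sum.inr (Sum.inr ())) := by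
  simp [Mmat, mulVec, dotProduct, Fintype.sum_sum_type, ite_mul, sub_eq_add_neg,
    apply_ite Complex.ofReal]

lemma rowC3 {n : ℕ} (D b : Fin n → ℝ) (w : Fin n ⊕ Fin n ⊕ Unit → ℂ) :
    ((Mmat D b).map Complex.ofReal *ᵥ w) (Sum.inr (Sum.inr ())) = ∑ i, w (Sum.inl i) := by
  simp [Mmat, mulVec, dotProduct, Fintype.sum_sum_type]

lemma eig_root {n : ℕ} (D b : Fin n → ℝ) (μ : ℂ)
    (w : Fin n ⊕ Fin n ⊕ Unit → ℂ) (hw : w ≠ 0)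
    (heq : (Mmat D b).map Complex.ofReal *ᵥ w = μ • w) :
    Pc D b μ = 0 := by
  set x : Fin n → ℂ := fun i => w (Sum.inl i) with hx
  set y : Fin n → ℂ := fun i => w (Sum.inr (Sum.inl i)) with hy
  set t : ℂ := w (Sum.inr (Sum.inr ())) with ht
  have E1 : ∀ i, (D i : ℂ) * x i - b i * y i = μ * x i := by
    intro i
    have := congrFun heq (Sum.inl i)
    rw [rowC1] at this
    simpa [Pi.smul_apply] using this
  have E2 : ∀ i, (D i : ℂ) * y i - b i * t = μ * y i := by
    intro i
    have := congrFun heq (Sum.inr (Sum.inl i))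
    rw [rowC2] at this
    simpa [Pi.smul_apply] using this
  have E3 : ∑ i, x i = μ * t := by
    have := congrFun heq (Sum.inr (Sum.inr ()))
    rw [rowC3] at this
    simpa [Pi.smul_apply] using this
  have hwnz : x ≠ 0 ∨ y ≠ 0 ∨ t ≠ 0 := by
    by_contra hc
    push_neg at hc
    obtain ⟨hx0, hy0, ht0⟩ := hc
    apply hw
    funext idx
    rcases idx with i | i | u
    · exact congrFun hx0 i
    · exact congrFun hy0 i
    · cases u; exact ht0
  have key : ∀ i, (μ - D i)^2 * x i = (b i:ℂ)^2 * t := by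
    intro i
    linear_combination (μ - D i) * (E1 i).symm - (b i : ℂ) * (E2 i).symm
  by_cases htz : t = 0
  · -- t = 0 case
    by_cases hk : ∃ k, (D k : ℂ) = μ
    · obtain ⟨k, hk⟩ := hk
      have hQ : ∏ i, (μ - (D i:ℂ))^2 = 0 :=
        Finset.prod_eq_zero (Finset.mem_univ k) (by rw [hk]; ring)
      unfold Pc
      rw [hQ, mul_zero]
      rw [sub_eq_zero, eq_comm]
      apply Finset.sum_eq_zero
      intro i _
      by_cases hik : i = k
      · subst hik
        -- term i = k : show b k ^ 2 * ∏_erase = 0, else contradiction w = 0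
        by_cases hterm : (b i : ℂ)^2 * ∏ j ∈ Finset.univ.erase i, (μ - (D j:ℂ))^2 = 0
        · exact hterm
        · exfalso
          have hbk : (b i : ℂ) ≠ 0 := fun hb => hterm (by rw [hb]; simp)
          have hDj : ∀ j, j ≠ i → (μ - (D j:ℂ)) ≠ 0 := by
            intro j hj hc
            apply hterm
            rw [Finset.prod_eq_zero (Finset.mem_erase.mpr ⟨hj, Finset.mem_univ j⟩)
              (by rw [hc]; ring), mul_zero]
          have hy0 : ∀ j, y j = 0 := by
            intro j
            by_cases hj : j = i
            · subst hj
              have h1 := E1 j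
              have hby : (b j:ℂ) * y j = 0 := by
                linear_combination -h1 + (x j) * hk
              exact (mul_eq_zero.mp hby).resolve_left hbk
            · have h2 := E2 j
              rw [htz, mul_zero, sub_zero] at h2
              have : (μ - (D j:ℂ)) * y j = 0 := by linear_combination -h2
              rcases mul_eq_zero.mp this with h | h
              · exact absurd h (hDj j hj)
              · exact h
          have hx0 : ∀ j, j ≠ i → x j = 0 := by
            intro j hj
            have h1 := E1 j
            rw [hy0 j, mul_zero, sub_zero] at h1
            have hmx : (μ - (D j:ℂ)) * x j = 0 := by linear_combination -h1
            exact (mul_eq_zero.mp hmx).resolve_left (hDj j hj)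
          have hxi : x i = 0 := by
            have hs : ∑ j, x j = x i :=
              Finset.sum_eq_single_of_mem i (Finset.mem_univ i) (fun j _ hj => hx0 j hj)
            have h0 : ∑ j, x j = 0 := by rw [E3, htz, mul_zero]
            rw [hs] at h0
            exact h0
          rcases hwnz with h | h | h
          · apply h
            funext j
            by_cases hj : j = i
            · subst hj; exact hxi
            · exact hx0 j hj
          · exact h (funext hy0)
          · exact h htz
      · -- i ≠ k : the erased product contains k
        rw [Finset.prod_eq_zero (Finset.mem_erase.mpr ⟨Ne.symm hik, Finset.mem_univ k⟩)
          (by rw [hk]; ring), mul_zero]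
    · -- no k : all components vanish, contradiction
      exfalso
      push_neg at hk
      have hne : ∀ i, (μ - (D i:ℂ)) ≠ 0 := fun i hc => hk i (by linear_combination -hc)
      have hy0 : ∀ i, y i = 0 := by
        intro i
        have h2 := E2 i
        rw [htz, mul_zero, sub_zero] at h2
        have : (μ - (D i:ℂ)) * y i = 0 := by linear_combination -h2
        exact (mul_eq_zero.mp this).resolve_left (hne i)
      have hx0 : ∀ i, x i = 0 := by
        intro i
        have h1 := E1 i
        rw [hy0 i, mul_zero, sub_zero] at h1
        have : (μ - (D i:ℂ)) * x i = 0 := by linear_combination -h1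
        exact (mul_eq_zero.mp this).resolve_left (hne i)
      rcases hwnz with h | h | h
      · exact h (funext hx0)
      · exact h (funext hy0)
      · exact h htz
  · -- t ≠ 0 case
    have hmain : t * Pc D b μ = 0 := by
      have h1 : ∀ i, (∏ j ∈ Finset.univ.erase i, (μ - (D j:ℂ))^2) * ((μ - D i)^2 * x i)
          = (b i:ℂ)^2 * t * ∏ j ∈ Finset.univ.erase i, (μ - (D j:ℂ))^2 := by
        intro i; rw [key i]; ring
      have h2 : ∀ i, (∏ j, (μ - (D j:ℂ))^2) * x i
          = t * ((b i:ℂ)^2 * ∏ j ∈ Finset.univ.erase i, (μ - (D j:ℂ))^2) := by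
        intro i
        rw [← Finset.mul_prod_erase Finset.univ _ (Finset.mem_univ i)]
        calc (μ - (D i:ℂ))^2 * (∏ j ∈ Finset.univ.erase i, (μ - (D j:ℂ))^2) * x i
            = (∏ j ∈ Finset.univ.erase i, (μ - (D j:ℂ))^2) * ((μ - D i)^2 * x i) := by ring
          _ = _ := by rw [key i]; ring
      have h3 : (∏ j, (μ - (D j:ℂ))^2) * (∑ i, x i)
          = t * ∑ i, (b i:ℂ)^2 * ∏ j ∈ Finset.univ.erase i, (μ - (D j:ℂ))^2 := by
        rw [Finset.mul_sum, Finset.mul_sum]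
        exact Finset.sum_congr rfl fun i _ => h2 i
      rw [E3] at h3
      unfold Pc
      linear_combination h3
    exact (mul_eq_zero.mp hmain).resolve_left htz


lemma rowR1 {n : ℕ} (D b : Fin n → ℝ) (v : Fin n ⊕ Fin n ⊕ Unit → ℝ) (i : Fin n) :
    (Mmat D b *ᵥ v) (Sum.inl i)
      = D i * v (Sum.inl i) - b i * v (Sum.inr (Sum.inl i)) := by
  simp [Mmat, mulVec, dotProduct, Fintype.sum_sum_type, ite_mul, sub_eq_add_neg]

lemma rowR2 {n : ℕ} (D b : Fin n → ℝ) (v : Fin n ⊕ Fin n ⊕ Unit → ℝ) (i : Fin n) :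
    (Mmat D b *ᵥ v) (Sum.inr (Sum.inl i))
      = D i * v (Sum.inr (Sum.inl i)) - b i * v (Sum.inr (Sum.inr ())) := by
  simp [Mmat, mulVec, dotProduct, Fintype.sum_sum_type, ite_mul, sub_eq_add_neg]

lemma rowR3 {n : ℕ} (D b : Fin n → ℝ) (v : Fin n ⊕ Fin n ⊕ Unit → ℝ) :
    (Mmat D b *ᵥ v) (Sum.inr (Sum.inr ())) = ∑ i, v (Sum.inl i) := by
  simp [Mmat, mulVec, dotProduct, Fintype.sum_sum_type]

lemma mulVec_eq_of_rows {n : ℕ} (D b : Fin n → ℝ) (v : Fin n ⊕ Fin n ⊕ Unit → ℝ) (l : ℝ)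
    (h1 : ∀ i, D i * v (Sum.inl i) - b i * v (Sum.inr (Sum.inl i)) = l * v (Sum.inl i))
    (h2 : ∀ i, D i * v (Sum.inr (Sum.inl i)) - b i * v (Sum.inr (Sum.inr ()))
      = l * v (Sum.inr (Sum.inl i)))
    (h3 : ∑ i, v (Sum.inl i) = l * v (Sum.inr (Sum.inr ()))) :
    Mmat D b *ᵥ v = l • v := by
  funext idx
  rcases idx with i | i | u
  · rw [rowR1]; exact h1 i
  · rw [rowR2]; exact h2 i
  · cases u; rw [rowR3]; exact h3

lemma real_eigvec {n : ℕ} (D b : Fin n → ℝ) (l : ℝ) (hP : Pr D b l = 0) :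
    ∃ v : Fin n ⊕ Fin n ⊕ Unit → ℝ, v ≠ 0 ∧ Mmat D b *ᵥ v = l • v := by
  by_cases hC : ∃ k j : Fin n, k ≠ j ∧ D k = l ∧ D j = l
  · -- two indices in the eigenspace
    obtain ⟨k, j, hkj, hk, hj⟩ := hC
    refine ⟨Sum.elim (fun i => (if i = k then (1:ℝ) else 0) - (if i = j then 1 else 0))
      (Sum.elim 0 0), ?_, ?_⟩
    · intro hc
      have := congrFun hc (Sum.inl k)
      simp [hkj] at this
    · apply mulVec_eq_of_rows
      · intro i
        by_cases hik : i = k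
        · subst hik; simp [hkj, hk]
        · by_cases hij : i = j
          · subst hij; simp [hik, hj]
          · simp [hik, hij]
      · intro i; simp
      · simp [Finset.sum_sub_distrib]
  · by_cases hk : ∃ k, D k = l
    · obtain ⟨k, hk⟩ := hk
      have hbk : b k = 0 := by
        by_contra hbk
        -- then Pr l < 0, contradiction
        have h0 : ∏ i, (l - D i)^2 = 0 :=
          Finset.prod_eq_zero (Finset.mem_univ k) (by rw [hk]; ring)
        have hDj : ∀ j ∈ Finset.univ.erase k, (0:ℝ) < (l - D j)^2 := by
          intro j hj
          have hjk : j ≠ k := (Finset.mem_erase.mp hj).1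
          have : D j ≠ l := by
            intro hc
            exact hC ⟨k, j, Ne.symm hjk, hk, hc⟩
          have hne : l - D j ≠ 0 := sub_ne_zero.mpr (Ne.symm this)
          exact (sq_nonneg _).lt_of_ne (Ne.symm (pow_ne_zero 2 hne))
        have hpos : 0 < (b k)^2 * ∏ j ∈ Finset.univ.erase k, (l - D j)^2 :=
          mul_pos (by positivity) (Finset.prod_pos hDj)
        have hle : (b k)^2 * ∏ j ∈ Finset.univ.erase k, (l - D j)^2
            ≤ ∑ i, (b i)^2 * ∏ j ∈ Finset.univ.erase i, (l - D j)^2 :=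
          Finset.single_le_sum (f := fun i => (b i)^2 * ∏ j ∈ Finset.univ.erase i, (l - D j)^2)
            (fun i _ => mul_nonneg (sq_nonneg _) (Finset.prod_nonneg fun j _ => sq_nonneg _))
            (Finset.mem_univ k)
        unfold Pr at hP
        rw [h0, mul_zero] at hP
        linarith
      -- eigenvector: y = e_k
      refine ⟨Sum.elim 0 (Sum.elim (fun i => if i = k then 1 else 0) 0), ?_, ?_⟩
      · intro hc
        have := congrFun hc (Sum.inr (Sum.inl k))
        simp at this
      · apply mulVec_eq_of_rows
        · intro i
          by_cases hik : i = k
          · subst hik; simp [hbk]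
          · simp [hik]
        · intro i
          by_cases hik : i = k
          · subst hik; simp [hk]
          · simp [hik]
        · simp
    · -- no eigenvalue of D equals l : secular vector
      push_neg at hk
      have hne : ∀ i, l - D i ≠ 0 := fun i => sub_ne_zero.mpr (Ne.symm (hk i))
      have hQ : (∏ i, (l - D i)^2) ≠ 0 :=
        Finset.prod_ne_zero_iff.mpr fun i _ => pow_ne_zero 2 (hne i)
      refine ⟨Sum.elim (fun i => (b i)^2 / (l - D i)^2)
        (Sum.elim (fun i => -(b i) / (l - D i)) (fun _ => 1)), ?_, ?_⟩
      · intro hc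
        have := congrFun hc (Sum.inr (Sum.inr ()))
        simp at this
      · apply mulVec_eq_of_rows
        · intro i
          simp only [Sum.elim_inl, Sum.elim_inr]
          field_simp [hne i]
          ring
        · intro i
          simp only [Sum.elim_inl, Sum.elim_inr]
          field_simp [hne i]
          ring
        · simp only [Sum.elim_inl, Sum.elim_inr, mul_one]
          -- ∑ b i ^2 / (l - D i)^2 = l
          have hterm : ∀ i : Fin n, (b i)^2 / (l - D i)^2
              = (b i)^2 * (∏ j ∈ Finset.univ.erase i, (l - D j)^2) / ∏ j, (l - D j)^2 := by
            intro i
            rw [← Finset.mul_prod_erase Finset.univ _ (Finset.mem_univ i)]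
            have hEne : (∏ j ∈ Finset.univ.erase i, (l - D j)^2) ≠ 0 :=
              Finset.prod_ne_zero_iff.mpr fun j _ => pow_ne_zero 2 (hne j)
            rw [div_eq_div_iff (pow_ne_zero 2 (hne i))
              (mul_ne_zero (pow_ne_zero 2 (hne i)) hEne)]
            ring
          rw [Finset.sum_congr rfl fun i _ => hterm i, ← Finset.sum_div]
          have hsum : ∑ i, (b i)^2 * ∏ j ∈ Finset.univ.erase i, (l - D j)^2
              = l * ∏ j, (l - D j)^2 := by
            unfold Pr at hP
            linarith
          rw [hsum]
          field_simp

theorem stmt11 {n : ℕ} (hn : 0 < n) (D b : Fin n → ℝ) (hD : Antitone D) :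
    ∃ lstar : ℝ,
      (∃ v : Fin n ⊕ Fin n ⊕ Unit → ℝ, v ≠ 0 ∧ Mmat D b *ᵥ v = lstar • v) ∧
      ∀ mu : ℂ,
        (∃ w : Fin n ⊕ Fin n ⊕ Unit → ℂ, w ≠ 0 ∧
          (Mmat D b).map Complex.ofReal *ᵥ w = mu • w) → mu.re ≤ lstar := by
  obtain ⟨l, hl0, hlmax⟩ := exists_lstar hn D b
  refine ⟨l, real_eigvec D b l hl0, ?_⟩
  rintro mu ⟨w, hw, heq⟩
  exact hlmax _ (root_re_le D b mu (eig_root D b mu w hw heq))
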